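/- Let α, β be odd integers and n, m ≥ 1. The polynomial f(x) = 2ⁿ + 2ᵐβx + αx² is reducible in ℤ[[x]] if and only if it is reducible as a polynomial in ℤ₂[x]. -/

import Mathlib

open Polynomial PowerSeries Filter

private lemma exists_A_V (j : ℕ) (u : ℤ_[2]ˣ) :
    ∃ (aI : ℕ → ℤ) (V : PowerSeries ℤ_[2]),
      aI 0 = 2 ^ j ∧ IsUnit V ∧
      (PowerSeries.X - PowerSeries.C ((u : ℤ_[2]) * 2 ^ j)) * V
        = PowerSeries.mk (fun k => ((aI k : ℤ) : ℤ_[2])) := by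
  classical
  set v : ℤ_[2] := ((u⁻¹ : ℤ_[2]ˣ) : ℤ_[2]) with hv
  have hvu : v * (u : ℤ_[2]) = 1 := by
    simp [hv]
  have ex : ∀ (k : ℕ) (w : ℤ_[2]), ∃ c : ℤ_[2],
      w + (((-w * v ^ (k+1)).appr j : ℕ) : ℤ_[2]) * (u : ℤ_[2]) ^ (k+1) = 2 ^ j * c := by
    intro k w
    have hs := PadicInt.appr_spec j (-w * v ^ (k+1))
    rw [Ideal.mem_span_singleton] at hs
    obtain ⟨t, ht⟩ := hs
    have hp2 : ((2 : ℕ) : ℤ_[2]) = 2 := by norm_cast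
    rw [hp2] at ht
    refine ⟨-(t * (u : ℤ_[2]) ^ (k+1)), ?_⟩
    have hpow : (v * (u : ℤ_[2])) ^ (k+1) = 1 := by rw [hvu, one_pow]
    linear_combination (-((u:ℤ_[2]) ^ (k+1))) * ht + (-w) * hpow
  set g : ℕ → ℤ × ℤ_[2] := fun k => Nat.rec ((2^j : ℤ), (1 : ℤ_[2]))
      (fun k ih => ((((-ih.2 * v ^ (k+1)).appr j : ℕ) : ℤ), Classical.choose (ex k ih.2))) k
    with hg
  have hgrec : ∀ k : ℕ, (g k).2 + (((g (k+1)).1 : ℤ) : ℤ_[2]) * (u : ℤ_[2]) ^ (k+1)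
      = 2 ^ j * (g (k+1)).2 := by
    intro k
    have h := Classical.choose_spec (ex k (g k).2)
    have h1 : (g (k+1)).1 = ((((-(g k).2 * v ^ (k+1)).appr j : ℕ)) : ℤ) := rfl
    have h2 : (g (k+1)).2 = Classical.choose (ex k (g k).2) := rfl
    rw [h1, h2, Int.cast_natCast]
    exact h
  refine ⟨fun k => (g k).1, PowerSeries.mk (fun k => -(g k).2 * v ^ (k+1)), rfl, ?_, ?_⟩
  · rw [PowerSeries.isUnit_iff_constantCoeff, ← PowerSeries.coeff_zero_eq_constantCoeff_apply,
      PowerSeries.coeff_mk]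
    rw [show (g 0).2 = 1 from rfl]
    exact (isUnit_one.neg.mul ((u⁻¹).isUnit.pow (0+1)))
  · ext k
    rw [PowerSeries.coeff_mk, sub_mul, map_sub]
    cases k with
    | zero =>
      rw [PowerSeries.coeff_zero_X_mul, PowerSeries.coeff_C_mul, PowerSeries.coeff_mk]
      rw [show (g 0).2 = (1:ℤ_[2]) from rfl, show ((fun k => (g k).1) 0) = 2^j from rfl]
      push_cast
      linear_combination ((2:ℤ_[2])^j) * hvu
    | succ k =>
      rw [PowerSeries.coeff_succ_X_mul, PowerSeries.coeff_C_mul, PowerSeries.coeff_mk,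
        PowerSeries.coeff_mk]
      have hpow : (v * (u : ℤ_[2])) ^ (k+2) = 1 := by rw [hvu, one_pow]
      linear_combination (-((u:ℤ_[2]) * v^(k+2))) * hgrec k
        + ((g k).2 * v^(k+1)) * hvu + (((g (k+1)).1 : ℤ) : ℤ_[2]) * hpow


private lemma coeffs_int (j : ℕ) (A B : PowerSeries ℤ_[2]) (aI : ℕ → ℤ) (fI : PowerSeries ℤ)
    (hA : A = PowerSeries.mk fun k => ((aI k : ℤ) : ℤ_[2])) (ha0 : aI 0 = 2 ^ j)
    (hAB : A * B = PowerSeries.map (Int.castRingHom ℤ_[2]) fI) :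
    ∀ k, ∃ z : ℤ, PowerSeries.coeff k B = (z : ℤ_[2]) := by
  have h2j : (((2:ℤ)^j : ℤ) : ℤ_[2]) ≠ 0 := by
    push_cast; exact pow_ne_zero _ two_ne_zero
  have main : ∀ k, PowerSeries.coeff k B ∈ (Int.castRingHom ℤ_[2]).range := by
    intro k
    induction k using Nat.strong_induction_on with
    | _ k ih =>
      have hk := congrArg (PowerSeries.coeff k) hAB
      rw [PowerSeries.coeff_mul, PowerSeries.coeff_map,
        Finset.Nat.sum_antidiagonal_eq_sum_range_succ_mk, Finset.sum_range_succ'] at hk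
      simp only [Nat.sub_zero] at hk
      have h0A : (PowerSeries.coeff 0) A = (((2:ℤ)^j : ℤ) : ℤ_[2]) := by
        rw [hA]; simp [ha0]
      rw [h0A] at hk
      have hsum : (∑ i ∈ Finset.range k,
          (PowerSeries.coeff ((i+1, k - (i+1)).1)) A
            * (PowerSeries.coeff ((i+1, k - (i+1)).2)) B)
          ∈ (Int.castRingHom ℤ_[2]).range := by
        refine Subring.sum_mem _ (fun i hi => Subring.mul_mem _ ?_ (ih (k - (i+1)) ?_))
        · exact ⟨aI (i+1), by rw [hA]; simp⟩
        · have := Finset.mem_range.mp hi; omega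
      have hmem : (((2:ℤ)^j : ℤ) : ℤ_[2]) * (PowerSeries.coeff k) B
          ∈ (Int.castRingHom ℤ_[2]).range := by
        have heq : (((2:ℤ)^j : ℤ) : ℤ_[2]) * (PowerSeries.coeff k) B
            = (Int.castRingHom ℤ_[2]) ((PowerSeries.coeff k) fI)
              - ∑ i ∈ Finset.range k,
                (PowerSeries.coeff ((i+1, k - (i+1)).1)) A
                  * (PowerSeries.coeff ((i+1, k - (i+1)).2)) B := by
          rw [← hk]; ring
        rw [heq]
        exact Subring.sub_mem _ ⟨_, rfl⟩ hsum
      obtain ⟨Z, hZ⟩ := hmem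
      have hZ' : (Z : ℤ_[2]) = (((2:ℤ)^j : ℤ) : ℤ_[2]) * (PowerSeries.coeff k) B := hZ
      have hnorm : ‖(Z : ℤ_[2])‖ ≤ (2:ℝ)^(-(j:ℤ)) := by
        rw [hZ', norm_mul]
        have h1 : ‖(((2:ℤ)^j : ℤ) : ℤ_[2])‖ = (2:ℝ)^(-(j:ℤ)) := by
          have h := PadicInt.norm_p_pow (p := 2) j
          have : (((2:ℤ)^j : ℤ) : ℤ_[2]) = ((2:ℕ) : ℤ_[2])^j := by push_cast; ring
          rw [this]
          exact_mod_cast h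
        rw [← h1]
        exact mul_le_of_le_one_right (norm_nonneg _) (PadicInt.norm_le_one _)
      have hdvd : ((2:ℕ)^j : ℤ) ∣ Z := by
        rw [← PadicInt.norm_int_le_pow_iff_dvd]
        exact_mod_cast hnorm
      obtain ⟨z, hz⟩ := hdvd
      refine ⟨z, ?_⟩
      have : (Int.castRingHom ℤ_[2]) z = (z : ℤ_[2]) := rfl
      rw [this]
      apply mul_left_cancel₀ h2j
      rw [← hZ', hz]
      push_cast
      ring
  intro k
  obtain ⟨z, hz⟩ := main k
  exact ⟨z, hz.symm⟩


private lemma odd_dvd_pow_two {x : ℤ} {n : ℕ} (hodd : ¬ (2 ∣ x)) (hdvd : x ∣ 2 ^ n) :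
    IsUnit x := by
  have h1 : x % 2 = 1 := by omega
  have hco : IsCoprime x (2 : ℤ) := ⟨1, -(x / 2), by omega⟩
  exact (hco.pow_right (n := n)).isUnit_of_dvd' dvd_rfl hdvd


private lemma coeff_quad {R : Type*} [CommRing R] (c0 c1 c2 : R) (d : ℕ) :
    (Polynomial.C c0 + Polynomial.C c1 * Polynomial.X
      + Polynomial.C c2 * Polynomial.X^2).coeff d
    = if d = 0 then c0 else if d = 1 then c1 else if d = 2 then c2 else 0 := by
  rw [Polynomial.coeff_add, Polynomial.coeff_add, Polynomial.coeff_C,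
    Polynomial.coeff_C_mul, Polynomial.coeff_C_mul, Polynomial.coeff_X, Polynomial.coeff_X_pow]
  rcases d with _ | _ | _ | d <;> norm_num

private lemma forward_dir (α β : ℤ) (hα : Odd α) (n m : ℕ)
    (a b : PowerSeries ℤ) (ha : ¬ IsUnit a) (hb : ¬ IsUnit b)
    (hab : (PowerSeries.C) ((2 : ℤ) ^ n) +
        (PowerSeries.C) ((2 : ℤ) ^ m * β) * PowerSeries.X +
        (PowerSeries.C) α * PowerSeries.X ^ 2 = a * b) :
    (∃ a b : Polynomial ℤ_[2], ¬ IsUnit a ∧ ¬ IsUnit b ∧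
      Polynomial.C ((2 : ℤ_[2]) ^ n) +
        Polynomial.C ((2 : ℤ_[2]) ^ m * (β : ℤ_[2])) * Polynomial.X +
        Polynomial.C ((α : ℤ) : ℤ_[2]) * Polynomial.X ^ 2 = a * b) := by
  classical
  set ψ : ℤ →+* ℤ_[2] := Int.castRingHom ℤ_[2] with hψ
  set fpolyZ : Polynomial ℤ := Polynomial.C (2^n) + Polynomial.C (2^m*β) * Polynomial.X
      + Polynomial.C α * Polynomial.X^2 with hfpolyZ
  have hcoe : (fpolyZ : PowerSeries ℤ) = (PowerSeries.C) ((2 : ℤ) ^ n) +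
      (PowerSeries.C) ((2 : ℤ) ^ m * β) * PowerSeries.X +
      (PowerSeries.C) α * PowerSeries.X ^ 2 := by
    rw [hfpolyZ]; push_cast; rfl
  have habs : (fpolyZ : PowerSeries ℤ) = a * b := by rw [hcoe]; exact hab
  set F2 : Polynomial ℤ_[2] := Polynomial.C ((2 : ℤ_[2]) ^ n) +
      Polynomial.C ((2 : ℤ_[2]) ^ m * (β : ℤ_[2])) * Polynomial.X +
      Polynomial.C ((α : ℤ) : ℤ_[2]) * Polynomial.X ^ 2 with hF2
  have hF2map : fpolyZ.map ψ = F2 := by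
    rw [hfpolyZ, hF2]
    simp only [Polynomial.map_add, Polynomial.map_mul, Polynomial.map_pow, Polynomial.map_C,
      Polynomial.map_X, eq_intCast, Int.cast_mul, Int.cast_pow, Int.cast_ofNat]
    norm_num [map_ofNat]
  -- arithmetic facts about the coefficients of a and b
  have hcc : PowerSeries.constantCoeff a * PowerSeries.constantCoeff b = 2^n := by
    have h := congrArg (PowerSeries.constantCoeff) habs
    rw [map_mul] at h
    rw [← h, ← PowerSeries.coeff_zero_eq_constantCoeff_apply, Polynomial.coeff_coe,
      hfpolyZ, coeff_quad]
    norm_num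
  have hccA : ¬ IsUnit (PowerSeries.constantCoeff a) := by
    intro h; exact ha (PowerSeries.isUnit_iff_constantCoeff.mpr h)
  have hccB : ¬ IsUnit (PowerSeries.constantCoeff b) := by
    intro h; exact hb (PowerSeries.isUnit_iff_constantCoeff.mpr h)
  have hevenA : 2 ∣ PowerSeries.constantCoeff a := by
    by_contra hodd
    exact hccA (odd_dvd_pow_two hodd ⟨_, hcc.symm⟩)
  have hevenB : 2 ∣ PowerSeries.constantCoeff b := by
    by_contra hodd
    refine hccB (odd_dvd_pow_two (n := n) hodd ⟨PowerSeries.constantCoeff a, by rw [← hcc]; ring⟩)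
  have hcoeffs : ∀ d, PowerSeries.coeff d (a * b) = fpolyZ.coeff d := by
    intro d
    rw [← habs, Polynomial.coeff_coe]
  have hc2 : PowerSeries.constantCoeff a * PowerSeries.coeff 2 b
      + PowerSeries.coeff 1 a * PowerSeries.coeff 1 b
      + PowerSeries.coeff 2 a * PowerSeries.constantCoeff b = α := by
    have h := hcoeffs 2
    rw [PowerSeries.coeff_mul, Finset.Nat.sum_antidiagonal_eq_sum_range_succ_mk,
      hfpolyZ, coeff_quad] at h
    norm_num [Finset.sum_range_succ] at h
    linear_combination h
  have hoddA1 : ¬ (2 ∣ PowerSeries.coeff 1 a) := by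
    have h0a : PowerSeries.coeff 0 a = PowerSeries.constantCoeff a := by
      rw [PowerSeries.coeff_zero_eq_constantCoeff]
    have hmulodd : Odd (PowerSeries.coeff 1 a * PowerSeries.coeff 1 b) := by
      have heq : PowerSeries.coeff 1 a * PowerSeries.coeff 1 b
          = α - (PowerSeries.constantCoeff a * PowerSeries.coeff 2 b
            + PowerSeries.coeff 2 a * PowerSeries.constantCoeff b) := by
        linear_combination hc2
      rw [heq]
      refine hα.sub_even (Even.add ?_ ?_)
      · obtain ⟨s, hs⟩ := hevenA
        exact ⟨s * PowerSeries.coeff 2 b, by rw [hs]; ring⟩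
      · obtain ⟨s, hs⟩ := hevenB
        exact ⟨PowerSeries.coeff 2 a * s, by rw [hs]; ring⟩
    have := (Int.odd_mul.mp hmulodd).1
    rw [Int.odd_iff] at this
    omega
  -- Hensel step: approximate roots of F2
  have hstep : ∀ N : ℕ, ∃ z : ℤ_[2], ‖z‖ ≤ 2⁻¹ ∧ ‖F2.eval z‖ ≤ ((2:ℝ)⁻¹)^(N+3) := by
    intro N
    set K := N + 3 with hK
    have hXdvd : (Polynomial.X : Polynomial ℤ)^K ∣ (a.trunc K * b.trunc K - fpolyZ) := by
      rw [Polynomial.X_pow_dvd_iff]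
      intro d hd
      rw [Polynomial.coeff_sub, Polynomial.coeff_mul]
      have hsum : ∀ p ∈ Finset.HasAntidiagonal.antidiagonal d,
          (a.trunc K).coeff p.1 * (b.trunc K).coeff p.2
            = PowerSeries.coeff p.1 a * PowerSeries.coeff p.2 b := by
        intro p hp
        have h1 : p.1 < K := lt_of_le_of_lt (Finset.HasAntidiagonal.antidiagonal.fst_le hp) hd
        have h2 : p.2 < K := lt_of_le_of_lt (Finset.HasAntidiagonal.antidiagonal.snd_le hp) hd
        rw [PowerSeries.coeff_trunc, PowerSeries.coeff_trunc, if_pos h1, if_pos h2]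
      rw [Finset.sum_congr rfl hsum, ← PowerSeries.coeff_mul, hcoeffs d, sub_self]
    obtain ⟨E, hE⟩ := hXdvd
    set TA := (a.trunc K).map ψ with hTA
    set TB := (b.trunc K).map ψ with hTB
    have hprod : TA * TB = F2 + Polynomial.X^K * E.map ψ := by
      have h := congrArg (Polynomial.map ψ) hE
      rw [Polynomial.map_sub, Polynomial.map_mul, Polynomial.map_mul, Polynomial.map_pow,
        Polynomial.map_X, hF2map] at h
      rw [hTA, hTB]
      linear_combination h
    have hTA0 : TA.coeff 0 = ψ (PowerSeries.coeff 0 a) := by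
      rw [hTA, Polynomial.coeff_map, PowerSeries.coeff_trunc, if_pos (by omega : 0 < K)]
    have hTA1 : TA.coeff 1 = ψ (PowerSeries.coeff 1 a) := by
      rw [hTA, Polynomial.coeff_map, PowerSeries.coeff_trunc, if_pos (by omega : 1 < K)]
    have hderiv : TA.derivative.eval 0 = ψ (PowerSeries.coeff 1 a) := by
      rw [← Polynomial.coeff_zero_eq_eval_zero, Polynomial.coeff_derivative, hTA1]
      push_cast; ring
    have hderivnorm : ‖TA.derivative.eval 0‖ = 1 := by
      rw [hderiv]
      refine le_antisymm (PadicInt.norm_le_one _) ?_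
      by_contra hlt
      push_neg at hlt
      have : ((2:ℕ):ℤ) ∣ PowerSeries.coeff 1 a :=
        (PadicInt.norm_int_lt_one_iff_dvd _).mp hlt
      exact hoddA1 (by exact_mod_cast this)
    have hhyp : ‖TA.eval 0‖ < ‖TA.derivative.eval 0‖^2 := by
      rw [hderivnorm, one_pow, ← Polynomial.coeff_zero_eq_eval_zero, hTA0]
      rw [show ψ (PowerSeries.coeff 0 a) = ((PowerSeries.coeff 0 a : ℤ) : ℤ_[2]) from rfl]
      rw [PadicInt.norm_int_lt_one_iff_dvd]
      rw [PowerSeries.coeff_zero_eq_constantCoeff]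
      exact_mod_cast hevenA
    obtain ⟨z, hz0, hzdist, _, _⟩ := hensels_lemma hhyp
    simp only [Polynomial.coe_aeval_eq_eval] at hz0 hzdist
    have hznorm : ‖z‖ ≤ 2⁻¹ := by
      have h1 : ‖z‖ < 1 := by
        rw [hderivnorm] at hzdist
        simpa using hzdist
      obtain ⟨t, ht⟩ := (PadicInt.norm_lt_one_iff_dvd z).mp h1
      rw [ht, norm_mul]
      have h2 : ‖((2:ℕ) : ℤ_[2])‖ = 2⁻¹ := by
        rw [PadicInt.norm_p]; norm_num
      calc ‖((2:ℕ):ℤ_[2])‖ * ‖t‖ ≤ ‖((2:ℕ):ℤ_[2])‖ * 1 :=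
            mul_le_mul_of_nonneg_left (PadicInt.norm_le_one t) (norm_nonneg _)
        _ = 2⁻¹ := by rw [h2, mul_one]
    refine ⟨z, hznorm, ?_⟩
    have hev := congrArg (Polynomial.eval z) hprod
    rw [Polynomial.eval_mul, hz0, zero_mul, Polynomial.eval_add, Polynomial.eval_mul,
      Polynomial.eval_pow, Polynomial.eval_X] at hev
    have hFz : F2.eval z = -(z^K * (E.map ψ).eval z) := by linear_combination -hev
    rw [hFz, norm_neg, norm_mul, norm_pow]
    calc ‖z‖^K * ‖(E.map ψ).eval z‖ ≤ (2⁻¹:ℝ)^K * 1 := by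
          refine mul_le_mul (pow_le_pow_left₀ (norm_nonneg _) hznorm K)
            (PadicInt.norm_le_one _) (norm_nonneg _) (by positivity)
      _ = ((2:ℝ)⁻¹)^(N+3) := by rw [mul_one]
  -- take a convergent subsequence of approximate roots
  choose zseq hzseq using hstep
  obtain ⟨r, φc, hφc, hconv⟩ := CompactSpace.tendsto_subseq zseq
  have htend0 : Tendsto (fun k => F2.eval (zseq (φc k))) atTop (nhds 0) := by
    refine squeeze_zero_norm (a := fun k => ((2:ℝ)⁻¹)^k) (fun k => ?_)
      (tendsto_pow_atTop_nhds_zero_of_lt_one (by norm_num) (by norm_num))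
    calc ‖F2.eval (zseq (φc k))‖ ≤ ((2:ℝ)⁻¹)^(φc k + 3) := (hzseq (φc k)).2
      _ ≤ ((2:ℝ)⁻¹)^k := by
          refine pow_le_pow_of_le_one (by norm_num) (by norm_num) ?_
          have := hφc.le_apply (x := k)
          omega
  have htendF : Tendsto (fun k => F2.eval (zseq (φc k))) atTop (nhds (F2.eval r)) :=
    (F2.continuous.tendsto r).comp hconv
  have hroot : F2.eval r = 0 := tendsto_nhds_unique htendF htend0
  obtain ⟨q, hq⟩ := Polynomial.dvd_iff_isRoot.mpr hroot
  have hαne : ((α : ℤ) : ℤ_[2]) ≠ 0 := by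
    rw [Int.cast_ne_zero]
    intro h
    rw [h] at hα
    exact (Int.not_odd_iff_even.mpr Even.zero) hα
  have hdegF2 : F2.degree = 2 := by
    have : F2 = Polynomial.C ((α : ℤ) : ℤ_[2]) * Polynomial.X^2
        + Polynomial.C ((2 : ℤ_[2]) ^ m * (β : ℤ_[2])) * Polynomial.X
        + Polynomial.C ((2 : ℤ_[2])^n) := by rw [hF2]; ring
    rw [this]
    exact Polynomial.degree_quadratic hαne
  have hF2ne : F2 ≠ 0 := fun h => by rw [h] at hdegF2; simp at hdegF2
  have hqne : q ≠ 0 := fun h => by rw [h, mul_zero] at hq; exact hF2ne hq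
  have hXrne : (Polynomial.X - Polynomial.C r : Polynomial ℤ_[2]) ≠ 0 :=
    Polynomial.X_sub_C_ne_zero r
  have hnatF2 : F2.natDegree = 2 := Polynomial.natDegree_eq_of_degree_eq_some hdegF2
  have hnatq : q.natDegree = 1 := by
    have h := hnatF2
    rw [hq, Polynomial.natDegree_mul hXrne hqne, Polynomial.natDegree_X_sub_C] at h
    omega
  refine ⟨Polynomial.X - Polynomial.C r, q, ?_, ?_, ?_⟩
  · intro hu
    have h := Polynomial.natDegree_eq_zero_of_isUnit hu
    rw [Polynomial.natDegree_X_sub_C] at h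
    exact one_ne_zero h
  · intro hu
    have h := Polynomial.natDegree_eq_zero_of_isUnit hu
    rw [hnatq] at h
    exact one_ne_zero h
  · exact hq


private lemma coeff_quad' {R : Type*} [CommRing R] (c0 c1 c2 : R) (d : ℕ) :
    (Polynomial.C c0 + Polynomial.C c1 * Polynomial.X
      + Polynomial.C c2 * Polynomial.X^2).coeff d
    = if d = 0 then c0 else if d = 1 then c1 else if d = 2 then c2 else 0 := by
  rw [Polynomial.coeff_add, Polynomial.coeff_add, Polynomial.coeff_C,
    Polynomial.coeff_C_mul, Polynomial.coeff_C_mul, Polynomial.coeff_X, Polynomial.coeff_X_pow]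
  rcases d with _ | _ | _ | d <;> norm_num

private lemma norm_two_pow_le {k : ℕ} (hk : 1 ≤ k) : ‖((2:ℤ_[2])^k)‖ ≤ 2⁻¹ := by
  have h2 : ‖(2:ℤ_[2])‖ = 2⁻¹ := by
    have h := PadicInt.norm_p (p := 2)
    have e : ((2:ℕ):ℤ_[2]) = (2:ℤ_[2]) := by norm_cast
    rw [e] at h
    rw [h]
    norm_num
  calc ‖(2:ℤ_[2])^k‖ = ‖(2:ℤ_[2])‖^k := norm_pow _ _
    _ ≤ ‖(2:ℤ_[2])‖^1 := by
        refine pow_le_pow_of_le_one (norm_nonneg _) ?_ hk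
        rw [h2]; norm_num
    _ = 2⁻¹ := by rw [pow_one, h2]

private lemma small_const {a0 a1 b0 b1 : ℤ_[2]} {n m : ℕ} {β : ℤ} (hn : 1 ≤ n) (hm : 1 ≤ m)
    (h0 : a0 * b0 = (2:ℤ_[2])^n) (h1 : a0*b1 + a1*b0 = (2:ℤ_[2])^m * (β:ℤ_[2]))
    (hb1 : ‖b1‖ = 1) : ‖a0‖ < 1 := by
  by_contra hc
  push_neg at hc
  have ha0 : ‖a0‖ = 1 := le_antisymm (PadicInt.norm_le_one _) hc
  have hb0 : ‖b0‖ < 1 := by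
    have := congrArg norm h0
    rw [norm_mul, ha0, one_mul] at this
    rw [this]
    exact lt_of_le_of_lt (norm_two_pow_le hn) (by norm_num)
  have hx : ‖a0 * b1‖ = 1 := by rw [norm_mul, ha0, hb1, one_mul]
  have hy : ‖a1 * b0‖ < 1 := by
    rw [norm_mul]
    calc ‖a1‖ * ‖b0‖ ≤ 1 * ‖b0‖ :=
          mul_le_mul_of_nonneg_right (PadicInt.norm_le_one _) (norm_nonneg _)
      _ = ‖b0‖ := one_mul _
      _ < 1 := hb0
  have hsum : ‖a0*b1 + a1*b0‖ = 1 := by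
    have hne : ‖a0*b1‖ ≠ ‖a1*b0‖ := by rw [hx]; exact (ne_of_gt hy)
    rw [PadicInt.norm_add_eq_max_of_ne hne, hx]
    exact max_eq_left (hx ▸ hy.le)
  rw [h1, norm_mul] at hsum
  have : ‖((β:ℤ):ℤ_[2])‖ ≤ 1 := PadicInt.norm_le_one _
  have h2m := norm_two_pow_le hm
  nlinarith [norm_nonneg ((2:ℤ_[2])^m), norm_nonneg ((β:ℤ):ℤ_[2])]

private lemma backward_dir (α β : ℤ) (hα : Odd α) (hβ : Odd β) (n m : ℕ)
    (hn : 1 ≤ n) (hm : 1 ≤ m)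
    (a b : Polynomial ℤ_[2]) (ha : ¬ IsUnit a) (hb : ¬ IsUnit b)
    (hab : Polynomial.C ((2 : ℤ_[2]) ^ n) +
        Polynomial.C ((2 : ℤ_[2]) ^ m * (β : ℤ_[2])) * Polynomial.X +
        Polynomial.C ((α : ℤ) : ℤ_[2]) * Polynomial.X ^ 2 = a * b) :
    (∃ a b : PowerSeries ℤ, ¬ IsUnit a ∧ ¬ IsUnit b ∧
      (PowerSeries.C) ((2 : ℤ) ^ n) +
        (PowerSeries.C) ((2 : ℤ) ^ m * β) * PowerSeries.X +
        (PowerSeries.C) α * PowerSeries.X ^ 2 = a * b) := by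
  classical
  -- basic facts
  have hnormα : ‖((α:ℤ):ℤ_[2])‖ = 1 := by
    refine le_antisymm (PadicInt.norm_le_one _) ?_
    by_contra hlt
    push_neg at hlt
    have := (PadicInt.norm_int_lt_one_iff_dvd _).mp hlt
    rw [Int.odd_iff] at hα
    omega
  -- degrees of a and b are both 1
  have hαne : ((α : ℤ) : ℤ_[2]) ≠ 0 := by
    intro h; rw [h] at hnormα; simp at hnormα
  set F2 : Polynomial ℤ_[2] := Polynomial.C ((2 : ℤ_[2]) ^ n) +
      Polynomial.C ((2 : ℤ_[2]) ^ m * (β : ℤ_[2])) * Polynomial.X +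
      Polynomial.C ((α : ℤ) : ℤ_[2]) * Polynomial.X ^ 2 with hF2
  have hdegF2 : F2.degree = 2 := by
    have h : F2 = Polynomial.C ((α : ℤ) : ℤ_[2]) * Polynomial.X^2
        + Polynomial.C ((2 : ℤ_[2]) ^ m * (β : ℤ_[2])) * Polynomial.X
        + Polynomial.C ((2 : ℤ_[2])^n) := by rw [hF2]; ring
    rw [h]
    exact Polynomial.degree_quadratic hαne
  have hF2c : ∀ d, F2.coeff d = if d = 0 then (2:ℤ_[2])^n
      else if d = 1 then (2:ℤ_[2])^m * (β:ℤ_[2]) else if d = 2 then ((α:ℤ):ℤ_[2]) else 0 := by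
    intro d; rw [hF2]; exact coeff_quad' _ _ _ d
  have hF2ne : F2 ≠ 0 := fun h => by rw [h] at hdegF2; simp at hdegF2
  have hane : a ≠ 0 := fun h => by rw [hab, h, zero_mul] at hF2ne; exact hF2ne rfl
  have hbne : b ≠ 0 := fun h => by rw [hab, h, mul_zero] at hF2ne; exact hF2ne rfl
  have hnatsum : a.natDegree + b.natDegree = 2 := by
    have h := Polynomial.natDegree_eq_of_degree_eq_some hdegF2
    rw [hab, Polynomial.natDegree_mul hane hbne] at h
    exact h
  have hdeg_ne0 : ∀ p q : Polynomial ℤ_[2], ¬ IsUnit p → F2 = p * q → p.natDegree ≠ 0 := by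
    intro p q hp hpq h0
    have hpC : p = Polynomial.C (p.coeff 0) := Polynomial.eq_C_of_natDegree_eq_zero h0
    have hcu : ¬ IsUnit (p.coeff 0) := fun h => hp (hpC ▸ Polynomial.isUnit_C.mpr h)
    have hclt : ‖p.coeff 0‖ < 1 :=
      lt_of_le_of_ne (PadicInt.norm_le_one _) (fun h => hcu (PadicInt.isUnit_iff.mpr h))
    have hc2 : F2.coeff 2 = p.coeff 0 * q.coeff 2 := by
      rw [hpq]
      conv_lhs => rw [hpC]
      rw [Polynomial.coeff_C_mul]
    rw [hF2c 2] at hc2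
    norm_num at hc2
    have : ‖((α:ℤ):ℤ_[2])‖ < 1 := by
      rw [hc2, norm_mul]
      calc ‖p.coeff 0‖ * ‖q.coeff 2‖ ≤ ‖p.coeff 0‖ * 1 :=
            mul_le_mul_of_nonneg_left (PadicInt.norm_le_one _) (norm_nonneg _)
        _ = ‖p.coeff 0‖ := mul_one _
        _ < 1 := hclt
    rw [hnormα] at this
    exact lt_irrefl _ this
  have hna : a.natDegree = 1 := by
    have h1 := hdeg_ne0 a b ha hab
    have h2 := hdeg_ne0 b a hb (by rw [hab]; ring)
    omega
  have hnb : b.natDegree = 1 := by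
    have h1 := hdeg_ne0 a b ha hab
    have h2 := hdeg_ne0 b a hb (by rw [hab]; ring)
    omega
  -- write a and b in linear form
  have hA : a = Polynomial.C (a.coeff 1) * Polynomial.X + Polynomial.C (a.coeff 0) :=
    Polynomial.eq_X_add_C_of_degree_le_one
      (by rw [Polynomial.degree_eq_natDegree hane, hna]; exact le_refl _)
  have hB : b = Polynomial.C (b.coeff 1) * Polynomial.X + Polynomial.C (b.coeff 0) :=
    Polynomial.eq_X_add_C_of_degree_le_one
      (by rw [Polynomial.degree_eq_natDegree hbne, hnb]; exact le_refl _)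
  set a0 := a.coeff 0 with ha0
  set a1 := a.coeff 1 with ha1
  set b0 := b.coeff 0 with hb0
  set b1 := b.coeff 1 with hb1
  -- coefficient relations
  have hquad : F2 = Polynomial.C (a0*b0) + Polynomial.C (a0*b1 + a1*b0) * Polynomial.X
      + Polynomial.C (a1*b1) * Polynomial.X^2 := by
    rw [hab]
    conv_lhs => rw [hA, hB]
    simp only [map_mul, map_add]
    ring
  have rel0 : a0 * b0 = (2:ℤ_[2])^n := by
    have h := congrArg (fun p => Polynomial.coeff p 0) hquad
    rw [hF2c 0, coeff_quad'] at h
    norm_num at h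
    exact h.symm
  have rel1 : a0*b1 + a1*b0 = (2:ℤ_[2])^m * (β:ℤ_[2]) := by
    have h := congrArg (fun p => Polynomial.coeff p 1) hquad
    rw [hF2c 1, coeff_quad'] at h
    norm_num at h
    exact h.symm
  have rel2 : a1 * b1 = ((α:ℤ):ℤ_[2]) := by
    have h := congrArg (fun p => Polynomial.coeff p 2) hquad
    rw [hF2c 2, coeff_quad'] at h
    norm_num at h
    exact h.symm
  -- norms of the coefficients
  have hmul1 : ‖a1‖ * ‖b1‖ = 1 := by rw [← norm_mul, rel2, hnormα]
  have ha1norm : ‖a1‖ = 1 := by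
    refine le_antisymm (PadicInt.norm_le_one _) ?_
    nlinarith [PadicInt.norm_le_one b1, norm_nonneg a1, norm_nonneg b1]
  have hb1norm : ‖b1‖ = 1 := by
    refine le_antisymm (PadicInt.norm_le_one _) ?_
    nlinarith [PadicInt.norm_le_one a1, norm_nonneg a1, norm_nonneg b1]
  have ha0lt : ‖a0‖ < 1 := small_const hn hm rel0 rel1 hb1norm
  have hb0lt : ‖b0‖ < 1 := small_const (a0 := b0) (b0 := a0) (a1 := b1) (b1 := a1) hn hm
    (by linear_combination rel0) (by linear_combination rel1) ha1norm
  obtain ⟨u, hu⟩ := PadicInt.isUnit_iff.mpr ha1norm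
  obtain ⟨w, hw⟩ := PadicInt.isUnit_iff.mpr hb1norm
  set r : ℤ_[2] := -(a0 * ((u⁻¹ : ℤ_[2]ˣ) : ℤ_[2])) with hrdef
  set s : ℤ_[2] := -(b0 * ((w⁻¹ : ℤ_[2]ˣ) : ℤ_[2])) with hsdef
  have hui : a1 * ((u⁻¹ : ℤ_[2]ˣ) : ℤ_[2]) = 1 := by
    rw [← hu]; exact u.mul_inv
  have hwi : b1 * ((w⁻¹ : ℤ_[2]ˣ) : ℤ_[2]) = 1 := by
    rw [← hw]; exact w.mul_inv
  have ha1r : a1 * r = -a0 := by rw [hrdef]; linear_combination (-a0) * hui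
  have hb1s : b1 * s = -b0 := by rw [hsdef]; linear_combination (-b0) * hwi
  have hrs : ((α:ℤ):ℤ_[2]) * (r*s) = (2:ℤ_[2])^n := by
    have h1 : ((α:ℤ):ℤ_[2]) * (r*s) = (a1*r)*(b1*s) := by linear_combination (-(r*s)) * rel2
    rw [ha1r, hb1s] at h1
    rw [h1, ← rel0]; ring
  have hsum : ((α:ℤ):ℤ_[2]) * (r+s) = -((2:ℤ_[2])^m * (β:ℤ_[2])) := by
    have h1 : ((α:ℤ):ℤ_[2]) * (r+s) = b1*(a1*r) + a1*(b1*s) := by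
      linear_combination (-(r+s)) * rel2
    rw [ha1r, hb1s] at h1
    linear_combination h1 - rel1
  have hrnorm : ‖r‖ < 1 := by
    rw [hrdef, norm_neg, norm_mul, PadicInt.norm_units, mul_one]
    exact ha0lt
  have hsnorm : ‖s‖ < 1 := by
    rw [hsdef, norm_neg, norm_mul, PadicInt.norm_units, mul_one]
    exact hb0lt
  have h2ne : (2:ℤ_[2]) ≠ 0 := two_ne_zero
  have hr0 : r ≠ 0 := by
    intro h
    refine pow_ne_zero n h2ne ?_
    rw [← hrs, h]; ring
  have hs0 : s ≠ 0 := by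
    intro h
    refine pow_ne_zero n h2ne ?_
    rw [← hrs, h]; ring
  set j : ℕ := r.valuation with hjdef
  set js : ℕ := s.valuation with hjsdef
  have hrep : r = (PadicInt.unitCoeff hr0 : ℤ_[2]) * (2:ℤ_[2])^j := by
    have h := PadicInt.unitCoeff_spec hr0
    rw [hjdef]
    exact_mod_cast h
  have hsep : s = (PadicInt.unitCoeff hs0 : ℤ_[2]) * (2:ℤ_[2])^js := by
    have h := PadicInt.unitCoeff_spec hs0
    rw [hjsdef]
    exact_mod_cast h
  have hj1 : 1 ≤ j := by
    by_contra hc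
    have hj0 : j = 0 := by omega
    rw [hrep, hj0, pow_zero, mul_one] at hrnorm
    rw [PadicInt.norm_units] at hrnorm
    norm_num at hrnorm
  have hjs1 : 1 ≤ js := by
    by_contra hc
    have hj0 : js = 0 := by omega
    rw [hsep, hj0, pow_zero, mul_one] at hsnorm
    rw [PadicInt.norm_units] at hsnorm
    norm_num at hsnorm
  have hnorm2pow : ∀ k : ℕ, ‖(2:ℤ_[2])^k‖ = (2:ℝ)^(-(k:ℤ)) := by
    intro k
    have h := PadicInt.norm_p_pow (p := 2) k
    have e : ((2:ℕ):ℤ_[2]) = (2:ℤ_[2]) := by norm_cast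
    rw [e] at h
    exact_mod_cast h
  have hjsum : j + js = n := by
    have h := congrArg norm hrs
    rw [norm_mul, hnormα, one_mul, norm_mul] at h
    rw [hrep, hsep, norm_mul, norm_mul, PadicInt.norm_units,
      PadicInt.norm_units, one_mul, one_mul, hnorm2pow, hnorm2pow, hnorm2pow,
      ← zpow_add₀ (by norm_num : (2:ℝ) ≠ 0)] at h
    have := zpow_right_injective₀ (by norm_num : (0:ℝ) < 2) (by norm_num : (2:ℝ) ≠ 1) h
    omega
  -- the power series construction
  obtain ⟨aI, V, haI0, hVu, hXV⟩ := exists_A_V j (PadicInt.unitCoeff hr0)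
  rw [← hrep] at hXV
  set ψ : ℤ →+* ℤ_[2] := Int.castRingHom ℤ_[2] with hψ
  set Aps : PowerSeries ℤ_[2] := PowerSeries.mk (fun k => ((aI k : ℤ) : ℤ_[2])) with hAps
  set Vu := hVu.unit with hVudef
  have hVuv : (Vu : PowerSeries ℤ_[2]) = V := IsUnit.unit_spec hVu
  set Bps : PowerSeries ℤ_[2] := PowerSeries.C ((α:ℤ):ℤ_[2])
      * (PowerSeries.X - PowerSeries.C s) * ((Vu⁻¹ : (PowerSeries ℤ_[2])ˣ) : PowerSeries ℤ_[2]) with hBps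
  set fsZ : PowerSeries ℤ := (PowerSeries.C) ((2 : ℤ) ^ n) +
      (PowerSeries.C) ((2 : ℤ) ^ m * β) * PowerSeries.X +
      (PowerSeries.C) α * PowerSeries.X ^ 2 with hfsZ
  have hmapf : PowerSeries.map ψ fsZ = PowerSeries.C ((2:ℤ_[2])^n)
      + PowerSeries.C ((2:ℤ_[2])^m * (β:ℤ_[2])) * PowerSeries.X
      + PowerSeries.C ((α:ℤ):ℤ_[2]) * PowerSeries.X^2 := by
    rw [hfsZ]
    simp only [map_add, map_mul, PowerSeries.map_C, PowerSeries.map_X, map_pow]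
    push_cast
    rfl
  have hfact : PowerSeries.C ((2:ℤ_[2])^n)
      + PowerSeries.C ((2:ℤ_[2])^m * (β:ℤ_[2])) * PowerSeries.X
      + PowerSeries.C ((α:ℤ):ℤ_[2]) * PowerSeries.X^2
      = PowerSeries.C ((α:ℤ):ℤ_[2]) * (PowerSeries.X - PowerSeries.C r)
        * (PowerSeries.X - PowerSeries.C s) := by
    have e : PowerSeries.C (((α:ℤ):ℤ_[2]) * (r*s))
        + PowerSeries.C (-(((α:ℤ):ℤ_[2]) * (r+s))) * PowerSeries.X
        + PowerSeries.C ((α:ℤ):ℤ_[2]) * PowerSeries.X^2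
        = PowerSeries.C ((α:ℤ):ℤ_[2]) * (PowerSeries.X - PowerSeries.C r)
          * (PowerSeries.X - PowerSeries.C s) := by
      simp only [map_mul, map_add, map_neg]
      ring
    rw [hrs, hsum, neg_neg] at e
    exact e
  have hABf : Aps * Bps = PowerSeries.map ψ fsZ := by
    calc Aps * Bps
        = (PowerSeries.C ((α:ℤ):ℤ_[2]) * (PowerSeries.X - PowerSeries.C r)
            * (PowerSeries.X - PowerSeries.C s))
          * ((Vu : PowerSeries ℤ_[2]) * ((Vu⁻¹ : (PowerSeries ℤ_[2])ˣ) : PowerSeries ℤ_[2])) := by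
          rw [← hXV, hBps, hVuv]; ring
      _ = PowerSeries.map ψ fsZ := by
          rw [Units.mul_inv, mul_one, hmapf, hfact]
  have hbint := coeffs_int j Aps Bps aI fsZ rfl haI0 hABf
  choose bI hbI using hbint
  have hinj : Function.Injective (PowerSeries.map ψ : PowerSeries ℤ → PowerSeries ℤ_[2]) := by
    intro F G h
    ext k
    have hk := congrArg (PowerSeries.coeff k) h
    rw [PowerSeries.coeff_map, PowerSeries.coeff_map] at hk
    exact Int.cast_injective hk
  have hmapA : PowerSeries.map ψ (PowerSeries.mk (fun k => aI k)) = Aps := by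
    ext k
    rw [PowerSeries.coeff_map, PowerSeries.coeff_mk, hAps, PowerSeries.coeff_mk]
    rfl
  have hmapB : PowerSeries.map ψ (PowerSeries.mk (fun k => bI k)) = Bps := by
    ext k
    rw [PowerSeries.coeff_map, PowerSeries.coeff_mk]
    exact (hbI k).symm
  refine ⟨PowerSeries.mk (fun k => aI k), PowerSeries.mk (fun k => bI k), ?_, ?_, ?_⟩
  · intro hunit
    rw [PowerSeries.isUnit_iff_constantCoeff, ← PowerSeries.coeff_zero_eq_constantCoeff_apply,
      PowerSeries.coeff_mk, haI0] at hunit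
    rw [Int.isUnit_iff] at hunit
    have h2j : (2:ℤ)^1 ≤ (2:ℤ)^j := pow_le_pow_right₀ (by norm_num) hj1
    omega
  · intro hunit
    rw [PowerSeries.isUnit_iff_constantCoeff, ← PowerSeries.coeff_zero_eq_constantCoeff_apply,
      PowerSeries.coeff_mk] at hunit
    have hcB : ((bI 0 : ℤ) : ℤ_[2]) = PowerSeries.constantCoeff Bps := by
      rw [← PowerSeries.coeff_zero_eq_constantCoeff_apply, ← hbI 0]
    have hnormB : ‖PowerSeries.constantCoeff Bps‖ < 1 := by
      rw [hBps, map_mul, map_mul, map_sub, PowerSeries.constantCoeff_X,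
        PowerSeries.constantCoeff_C, PowerSeries.constantCoeff_C]
      rw [norm_mul, norm_mul, hnormα, one_mul, zero_sub, norm_neg]
      calc ‖s‖ * ‖PowerSeries.constantCoeff ((Vu⁻¹ : (PowerSeries ℤ_[2])ˣ) : PowerSeries ℤ_[2])‖
          ≤ ‖s‖ * 1 := mul_le_mul_of_nonneg_left (PadicInt.norm_le_one _) (norm_nonneg _)
        _ = ‖s‖ := mul_one _
        _ < 1 := hsnorm
    rw [← hcB, PadicInt.norm_int_lt_one_iff_dvd] at hnormB
    rw [Int.isUnit_iff] at hunit
    omega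
  · refine hinj ?_
    rw [map_mul, hmapA, hmapB, hABf]



theorem stmt_19 (α β : ℤ) (hα : Odd α) (hβ : Odd β) (n m : ℕ)
    (hn : 1 ≤ n) (hm : 1 ≤ m) :
    (∃ a b : PowerSeries ℤ, ¬ IsUnit a ∧ ¬ IsUnit b ∧
      (@PowerSeries.C ℤ _) ((2 : ℤ) ^ n) +
        (@PowerSeries.C ℤ _) ((2 : ℤ) ^ m * β) * PowerSeries.X +
        (@PowerSeries.C ℤ _) α * PowerSeries.X ^ 2 = a * b) ↔
    (∃ a b : Polynomial ℤ_[2], ¬ IsUnit a ∧ ¬ IsUnit b ∧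
      Polynomial.C ((2 : ℤ_[2]) ^ n) +
        Polynomial.C ((2 : ℤ_[2]) ^ m * (β : ℤ_[2])) * Polynomial.X +
        Polynomial.C (α : ℤ_[2]) * Polynomial.X ^ 2 = a * b) := by
  constructor
  · rintro ⟨a, b, ha, hb, hab⟩
    exact forward_dir α β hα n m a b ha hb hab
  · rintro ⟨a, b, ha, hb, hab⟩
    exact backward_dir α β hα hβ n m hn hm a b ha hb hab
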